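/- arXiv:1112.0857 — 4 statements merged into one kernel-verified Lean document; each statement's English description precedes it below -/
import Mathlib

section
/- Let G = ⟨N, E, l⟩ be a finite labeled directed acyclic graph, let V be any type of hash values, let H be any function mapping a pair (label, finite set of hash values) to a hash value, and let h : N → V be the function defined by well-founded recursion on the child relation by h(n) = H(l(n), { h(c) : c ∈ children(n) }). Then bisimilar nodes receive the same hash value: for all nodes n₁, n₂ ∈ N, n₁ ≈ n₂ implies h(n₁) = h(n₂). -/
/-- A labeled directed graph: a directed edge relation and a node labeling. -/
structure LGraph (V : Type*) (L : Type*) where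
  edge : V → V → Prop
  label : V → L

/-- `R` is a bisimulation between `G₁` and `G₂`. -/
def IsBisim {V₁ V₂ L : Type*} (G₁ : LGraph V₁ L) (G₂ : LGraph V₂ L)
    (R : V₁ → V₂ → Prop) : Prop :=
  ∀ n₁ n₂, R n₁ n₂ →
    G₁.label n₁ = G₂.label n₂ ∧
    (∀ c₁, G₁.edge n₁ c₁ → ∃ c₂, G₂.edge n₂ c₂ ∧ R c₁ c₂) ∧
    (∀ c₂, G₂.edge n₂ c₂ → ∃ c₁, G₁.edge n₁ c₁ ∧ R c₁ c₂)

/-- Nodes are bisimilar iff some bisimulation relates them. -/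
def Bisimilar {V₁ V₂ L : Type*} (G₁ : LGraph V₁ L) (G₂ : LGraph V₂ L)
    (n₁ : V₁) (n₂ : V₂) : Prop :=
  ∃ R, IsBisim G₁ G₂ R ∧ R n₁ n₂


/-- On a finite labeled DAG, if `h` assigns hash values by the recurrence
`h n = H (label n) {h c : c a child of n}` (as obtained by well-founded
recursion on the child relation), then bisimilar nodes receive the same
hash value. -/
theorem bisimilar_imp_hash_eq {V L Vh : Type*} [Fintype V]
    (G : LGraph V L) (hacyc : WellFounded (fun c n => G.edge n c))
    (H : L → Set Vh → Vh) (h : V → Vh)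
    (hrec : ∀ n, h n = H (G.label n) {v | ∃ c, G.edge n c ∧ h c = v}) :
    ∀ n₁ n₂, Bisimilar G G n₁ n₂ → h n₁ = h n₂ := by
  intro n₁
  induction n₁ using hacyc.induction with
  | _ n₁ ih =>
    rintro n₂ ⟨R, hR, hRn⟩
    obtain ⟨hlab, hfwd, hbwd⟩ := hR n₁ n₂ hRn
    rw [hrec n₁, hrec n₂, hlab]
    congr 1
    ext v
    constructor
    · rintro ⟨c₁, hc₁, rfl⟩
      obtain ⟨c₂, hc₂, hRc⟩ := hfwd c₁ hc₁
      exact ⟨c₂, hc₂, (ih c₁ hc₁ c₂ ⟨R, hR, hRc⟩).symm⟩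
    · rintro ⟨c₂, hc₂, rfl⟩
      obtain ⟨c₁, hc₁, hRc⟩ := hbwd c₂ hc₂
      exact ⟨c₁, hc₁, ih c₁ hc₁ c₂ ⟨R, hR, hRc⟩⟩
end

section
/- Let G = ⟨N, E, l⟩ be a finite labeled directed graph and let G' = ⟨N', E', l'⟩ be any finite labeled directed graph that is bisimilar to G. Then the number of nodes of G' is at least the number of bisimilarity equivalence classes of G, i.e., |N'| ≥ |N↓| where N↓ is the node set of the quotient graph G↓ of G. Hence G↓ is a smallest graph bisimilar to G. -/
/-- The quotient graph `G↓` of `G` by bisimilarity: nodes are the bisimilarity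
equivalence classes, the label of a class is the common label of its members,
and there is an edge from class `C` to class `D` iff some node in `C` has a
child in `D`. -/
def quotGraph {V L : Type*} (G : LGraph V L) : LGraph (Quot (Bisimilar G G)) L where
  edge := fun C D => ∃ m n, Quot.mk (Bisimilar G G) m = C ∧
    Quot.mk (Bisimilar G G) n = D ∧ G.edge m n
  label := Quot.lift G.label (fun a b hab =>
    (hab.choose_spec.1 a b hab.choose_spec.2).1)

/-- The graphs `G₁` and `G₂` are bisimilar: every node of `G₁` is bisimilar to
some node of `G₂` and vice versa. -/
def GraphBisimilar {V₁ V₂ L : Type*} (G₁ : LGraph V₁ L) (G₂ : LGraph V₂ L) : Prop :=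
  (∀ n₁, ∃ n₂, Bisimilar G₁ G₂ n₁ n₂) ∧ (∀ n₂, ∃ n₁, Bisimilar G₁ G₂ n₁ n₂)


lemma bisim_symm {V₁ V₂ L : Type*} {G₁ : LGraph V₁ L} {G₂ : LGraph V₂ L}
    {a : V₁} {b : V₂} (h : Bisimilar G₁ G₂ a b) : Bisimilar G₂ G₁ b a := by
  obtain ⟨R, hR, hab⟩ := h
  exact ⟨fun x y => R y x, fun n₂ n₁ hr =>
    ⟨((hR n₁ n₂ hr).1).symm, (hR n₁ n₂ hr).2.2, (hR n₁ n₂ hr).2.1⟩, hab⟩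

lemma bisim_trans {V₁ V₂ V₃ L : Type*} {G₁ : LGraph V₁ L} {G₂ : LGraph V₂ L}
    {G₃ : LGraph V₃ L} {a : V₁} {b : V₂} {c : V₃}
    (h₁ : Bisimilar G₁ G₂ a b) (h₂ : Bisimilar G₂ G₃ b c) : Bisimilar G₁ G₃ a c := by
  obtain ⟨R, hR, hab⟩ := h₁
  obtain ⟨S, hS, hbc⟩ := h₂
  refine ⟨fun x z => ∃ y, R x y ∧ S y z, fun n₁ n₃ ⟨n₂, hr, hs⟩ => ?_, b, hab, hbc⟩
  obtain ⟨hl₁, hf₁, hb₁⟩ := hR n₁ n₂ hr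
  obtain ⟨hl₂, hf₂, hb₂⟩ := hS n₂ n₃ hs
  refine ⟨hl₁.trans hl₂, fun c₁ hc₁ => ?_, fun c₃ hc₃ => ?_⟩
  · obtain ⟨c₂, he₂, hr'⟩ := hf₁ c₁ hc₁
    obtain ⟨c₃, he₃, hs'⟩ := hf₂ c₂ he₂
    exact ⟨c₃, he₃, c₂, hr', hs'⟩
  · obtain ⟨c₂, he₂, hs'⟩ := hb₂ c₃ hc₃
    obtain ⟨c₁, he₁, hr'⟩ := hb₁ c₂ he₂
    exact ⟨c₁, he₁, c₂, hr', hs'⟩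

/-- Any finite labeled directed graph `G'` that is bisimilar to `G` has at
least as many nodes as `G` has bisimilarity equivalence classes; hence the
quotient graph `G↓` is a smallest graph bisimilar to `G`. -/
theorem card_ge_card_quot {V V' L : Type*} [Fintype V] [Fintype V']
    (G : LGraph V L) (G' : LGraph V' L) (h : GraphBisimilar G G') :
    Nat.card (Quot (Bisimilar G G)) ≤ Nat.card V' := by
  let g : V' → Quot (Bisimilar G G) := fun n' =>
    Quot.mk _ (h.2 n').choose
  refine Nat.card_le_card_of_surjective g ?_
  intro C
  obtain ⟨n, rfl⟩ := Quot.exists_rep C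
  obtain ⟨n', hn'⟩ := h.1 n
  refine ⟨n', ?_⟩
  show Quot.mk _ _ = _
  refine Quot.sound ?_
  exact bisim_trans (h.2 n').choose_spec (bisim_symm hn')
end

section
/- Let G be a finite rooted labeled tree with root r, and for a node n let L(r,n) denote the sequence of labels of the nodes on the directed path from r to n (including both endpoints). Then two nodes n and m of G are backward bisimilar if and only if L(r,n) = L(r,m). -/
/-- Backward `k`-bisimilarity `n ≈ᵏ m`, defined by recursion on `k`:
`n ≈⁰ m` iff the labels agree; `n ≈ᵏ⁺¹ m` iff `n ≈ᵏ m`, every parent of `n`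
is backward `k`-bisimilar to some parent of `m`, and vice versa. -/
def BackKBisim {V L : Type*} (G : LGraph V L) : ℕ → V → V → Prop
  | 0, n, m => G.label n = G.label m
  | k + 1, n, m =>
      BackKBisim G k n m ∧
      (∀ n', G.edge n' n → ∃ m', G.edge m' m ∧ BackKBisim G k n' m') ∧
      (∀ m', G.edge m' m → ∃ n', G.edge n' n ∧ BackKBisim G k n' m')

/-- `R` is a backward bisimulation on `G`: related nodes have the same label,
and every parent of one is related to some parent of the other. -/
def IsBackBisim {V L : Type*} (G : LGraph V L) (R : V → V → Prop) : Prop :=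
  ∀ n₁ n₂, R n₁ n₂ →
    G.label n₁ = G.label n₂ ∧
    (∀ p₁, G.edge p₁ n₁ → ∃ p₂, G.edge p₂ n₂ ∧ R p₁ p₂) ∧
    (∀ p₂, G.edge p₂ n₂ → ∃ p₁, G.edge p₁ n₁ ∧ R p₁ p₂)

/-- Nodes are backward bisimilar iff some backward bisimulation relates them. -/
def BackBisimilar {V L : Type*} (G : LGraph V L) (n₁ n₂ : V) : Prop :=
  ∃ R, IsBackBisim G R ∧ R n₁ n₂

/-- `p` is the sequence of nodes on a directed path from `r` to `n`
(including both endpoints). -/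
def IsPathFromTo {V L : Type*} (G : LGraph V L) (r n : V) (p : List V) : Prop :=
  p.head? = some r ∧ p.getLast? = some n ∧ List.Chain' G.edge p

section Helpers
variable {V L : Type*} (G : LGraph V L) (r : V)

lemma path_ne_nil {n : V} {p : List V} (h : IsPathFromTo G r n p) : p ≠ [] := by
  rintro rfl; simp [IsPathFromTo] at h

lemma path_getLast {n : V} {p : List V} (h : IsPathFromTo G r n p) :
    p.getLast (path_ne_nil G r h) = n := by
  have := h.2.1
  rwa [List.getLast?_eq_getLast (path_ne_nil G r h), Option.some_inj] at this

lemma path_singleton {n : V} {p : List V} (h : IsPathFromTo G r n p)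
    (hp : p.dropLast = []) : n = r ∧ p = [n] := by
  have hne := path_ne_nil G r h
  have hdec := List.dropLast_append_getLast hne
  rw [hp, path_getLast G r h] at hdec
  simp at hdec
  refine ⟨?_, hdec.symm⟩
  have := h.1
  rw [← hdec] at this
  simpa using this

lemma path_step {n : V} {p : List V} (h : IsPathFromTo G r n p)
    (hp : p.dropLast ≠ []) :
    IsPathFromTo G r (p.dropLast.getLast hp) p.dropLast ∧
      G.edge (p.dropLast.getLast hp) n := by
  have hne := path_ne_nil G r h
  have hdec := List.dropLast_append_getLast hne
  rw [path_getLast G r h] at hdec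
  obtain ⟨h1, h2, h3⟩ := h
  rw [← hdec, List.Chain', List.isChain_append] at h3
  refine ⟨⟨?_, List.getLast?_eq_getLast hp, h3.1⟩, ?_⟩
  · rw [← hdec, List.head?_append_of_ne_nil _ hp] at h1; exact h1
  · exact h3.2.2 _ (by simp [List.getLast?_eq_getLast hp]) n rfl


lemma maps_eq (hroot : ∀ m, ¬ G.edge m r) (hparent : ∀ n, n ≠ r → ∃! m, G.edge m n)
    {R : V → V → Prop} (hR : IsBackBisim G R) :
    ∀ k (n m : V) (pn pm : List V), pn.length ≤ k → R n m →
      IsPathFromTo G r n pn → IsPathFromTo G r m pm →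
      pn.map G.label = pm.map G.label := by
  intro k
  induction k with
  | zero =>
    intro n m pn pm hlen _ hpn _
    have := path_ne_nil G r hpn
    simp [List.length_eq_zero_iff.mp (Nat.le_zero.mp hlen)] at this
  | succ k ih =>
    intro n m pn pm hlen hRnm hpn hpm
    obtain ⟨hlab, hfwd, hbwd⟩ := hR n m hRnm
    by_cases h1 : pn.dropLast = []
    · obtain ⟨hnr, hpn1⟩ := path_singleton G r hpn h1
      have hmr : m = r := by
        by_contra hmr
        obtain ⟨p₂, hp₂, -⟩ := hparent m hmr
        obtain ⟨p₁, hp₁, -⟩ := hbwd p₂ hp₂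
        exact hroot p₁ (hnr ▸ hp₁)
      have h2 : pm.dropLast = [] := by
        by_contra h2
        exact hroot _ (hmr ▸ (path_step G r hpm h2).2)
      obtain ⟨-, hpm1⟩ := path_singleton G r hpm h2
      rw [hpn1, hpm1]; simp [hlab]
    · obtain ⟨hpn', hedge1⟩ := path_step G r hpn h1
      have hnr : n ≠ r := fun h => hroot _ (h ▸ hedge1)
      obtain ⟨p₂, hedge2, hR'⟩ := hfwd _ hedge1
      have hmr : m ≠ r := fun h => hroot _ (h ▸ hedge2)
      have h2 : pm.dropLast ≠ [] := by
        intro h2; exact hmr (path_singleton G r hpm h2).1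
      obtain ⟨hpm', hedge2'⟩ := path_step G r hpm h2
      have hq : pm.dropLast.getLast h2 = p₂ :=
        (hparent m hmr).unique hedge2' hedge2
      have hlen' : pn.dropLast.length ≤ k := by
        have := List.length_dropLast (xs := pn)
        omega
      have ihres := ih _ _ _ _ hlen' (hq ▸ hR') hpn' hpm'
      calc pn.map G.label = pn.dropLast.map G.label ++ [G.label n] := by
            conv_lhs => rw [← List.dropLast_append_getLast (path_ne_nil G r hpn)]
            rw [List.map_append, path_getLast G r hpn]
            simp
        _ = pm.dropLast.map G.label ++ [G.label m] := by rw [ihres, hlab]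
        _ = pm.map G.label := by
            conv_rhs => rw [← List.dropLast_append_getLast (path_ne_nil G r hpm)]
            rw [List.map_append, path_getLast G r hpm]
            simp

lemma R_step (hroot : ∀ m, ¬ G.edge m r) (hparent : ∀ n, n ≠ r → ∃! m, G.edge m n)
    {a b : V} {pa pb : List V} (ha : IsPathFromTo G r a pa) (hb : IsPathFromTo G r b pb)
    (hmap : pa.map G.label = pb.map G.label) {p₁ : V} (hp₁ : G.edge p₁ a) :
    ∃ p₂, G.edge p₂ b ∧ ∃ qa qb, IsPathFromTo G r p₁ qa ∧ IsPathFromTo G r p₂ qb ∧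
      qa.map G.label = qb.map G.label := by
  have har : a ≠ r := fun h => hroot _ (h ▸ hp₁)
  have h1 : pa.dropLast ≠ [] := fun h => har (path_singleton G r ha h).1
  obtain ⟨ha', hedge⟩ := path_step G r ha h1
  have hpeq : pa.dropLast.getLast h1 = p₁ := (hparent a har).unique hedge hp₁
  have hlen : pa.length = pb.length := by
    have := congrArg List.length hmap; simpa using this
  have h2 : pb.dropLast ≠ [] := by
    intro h2
    apply h1
    have l2 : pb.dropLast.length = 0 := by rw [h2]; rfl
    rw [← List.length_eq_zero_iff]
    have := List.length_dropLast (xs := pa)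
    have := List.length_dropLast (xs := pb)
    have := List.length_pos_iff.mpr (path_ne_nil G r ha)
    have := List.length_pos_iff.mpr (path_ne_nil G r hb)
    omega
  obtain ⟨hb', hedge2⟩ := path_step G r hb h2
  refine ⟨_, hedge2, pa.dropLast, pb.dropLast, hpeq ▸ ha', hb', ?_⟩
  rw [List.map_dropLast, List.map_dropLast, hmap]

end Helpers

/-- In a finite rooted labeled tree, two nodes are backward bisimilar iff the
label sequences `L(r,·)` of the directed paths from the root to them agree. -/
theorem backBisimilar_iff_rootLabelPath_eq {V L : Type*} [Fintype V]
    (G : LGraph V L) (r : V)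
    (hroot : ∀ m, ¬ G.edge m r)
    (hparent : ∀ n, n ≠ r → ∃! m, G.edge m n)
    (hreach : ∀ n, ∃ p, IsPathFromTo G r n p)
    (n m : V)
    (pn pm : List V) (hpn : IsPathFromTo G r n pn) (hpm : IsPathFromTo G r m pm) :
    BackBisimilar G n m ↔ pn.map G.label = pm.map G.label := by
  constructor
  · rintro ⟨R, hR, hRnm⟩
    exact maps_eq G r hroot hparent hR pn.length n m pn pm le_rfl hRnm hpn hpm
  · intro hmap
    refine ⟨fun a b => ∃ pa pb, IsPathFromTo G r a pa ∧ IsPathFromTo G r b pb ∧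
      pa.map G.label = pb.map G.label, ?_, pn, pm, hpn, hpm, hmap⟩
    rintro a b ⟨pa, pb, ha, hb, hm⟩
    refine ⟨?_, ?_, ?_⟩
    · have h1 : (pa.map G.label).getLast? = some (G.label a) := by
        rw [List.getLast?_map, ha.2.1]; rfl
      have h2 : (pb.map G.label).getLast? = some (G.label b) := by
        rw [List.getLast?_map, hb.2.1]; rfl
      rw [hm, h2, Option.some_inj] at h1
      exact h1.symm
    · intro p₁ hp₁
      obtain ⟨p₂, hp₂, qa, qb, hqa, hqb, hq⟩ := R_step G r hroot hparent ha hb hm hp₁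
      exact ⟨p₂, hp₂, qa, qb, hqa, hqb, hq⟩
    · intro p₂ hp₂
      obtain ⟨p₁, hp₁, qa, qb, hqa, hqb, hq⟩ := R_step G r hroot hparent hb ha hm.symm hp₂
      exact ⟨p₁, hp₁, qb, qa, hqb, hqa, hq.symm⟩
end

section
/- Let G = ⟨N, E, l⟩ be a finite rooted labeled tree with root r, let λ be a reserved label not in the range of l, and let m, n ∈ N and k ≥ 0. Then n ≈ᵏ m (n and m are backward k-bisimilar) if and only if T_n^{k+1} = T_m^{k+1} (their (k+1)-traces are equal). -/
/-- The `k`-trace of a label sequence `s`: the last `k` elements of `s`;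
if `k` exceeds the length of `s`, the sequence `s` is prefixed with enough
copies of the reserved label `lam` to reach length `k`. -/
def ktrace {L : Type*} (lam : L) (s : List L) (k : ℕ) : List L :=
  if k ≤ s.length then s.drop (s.length - k)
  else List.replicate (k - s.length) lam ++ s

lemma ktrace_zero {L : Type*} (lam : L) (s : List L) : ktrace lam s 0 = [] := by
  simp [ktrace]

lemma ktrace_nil {L : Type*} (lam : L) (k : ℕ) :
    ktrace lam ([] : List L) k = List.replicate k lam := by
  unfold ktrace
  split <;> simp_all

lemma ktrace_length {L : Type*} (lam : L) (s : List L) (k : ℕ) :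
    (ktrace lam s k).length = k := by
  unfold ktrace
  split <;> simp <;> omega

lemma ktrace_concat {L : Type*} (lam : L) (s : List L) (a : L) (k : ℕ) :
    ktrace lam (s ++ [a]) (k + 1) = ktrace lam s k ++ [a] := by
  unfold ktrace
  rcases le_or_gt k s.length with h | h
  · rw [if_pos (by simp; omega), if_pos h]
    rw [List.drop_append_of_le_length (by simp)]
    congr 2
    simp
  · rw [if_neg (by simp; omega), if_neg (by omega)]
    rw [← List.append_assoc]
    congr 2
    simp

lemma ktrace_tail {L : Type*} (lam : L) (s : List L) (k : ℕ) :
    (ktrace lam s (k + 1)).tail = ktrace lam s k := by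
  induction s using List.reverseRecOn generalizing k with
  | nil => rw [ktrace_nil, ktrace_nil]; simp [List.replicate_succ]
  | append_singleton q a ih =>
    rw [ktrace_concat]
    rcases k with _ | j
    · rw [ktrace_zero, ktrace_zero]; simp
    · rw [ktrace_concat]
      have hne : ktrace lam q (j + 1) ≠ [] := by
        intro h
        have := ktrace_length lam q (j + 1)
        rw [h] at this; simp at this
      rw [List.tail_append_of_ne_nil, ih]
      exact hne

lemma ktrace_one {L : Type*} (lam : L) (s : List L) (a : L) (h : s.getLast? = some a) :
    ktrace lam s 1 = [a] := by
  rcases List.eq_nil_or_concat s with rfl | ⟨q, b, rfl⟩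
  · simp at h
  · rw [List.concat_eq_append] at *
    rw [ktrace_concat, ktrace_zero]
    simp_all

lemma ktrace_getLast? {L : Type*} (lam : L) (s : List L) (a : L) (h : s.getLast? = some a)
    (k : ℕ) : (ktrace lam s (k + 1)).getLast? = some a := by
  rcases List.eq_nil_or_concat s with rfl | ⟨q, b, rfl⟩
  · simp at h
  · rw [List.concat_eq_append] at *
    rw [ktrace_concat]
    simp_all

lemma backKBisim_refl {V L : Type*} (G : LGraph V L) (k : ℕ) :
    ∀ n, BackKBisim G k n n := by
  induction k with
  | zero => intro n; rfl
  | succ k ih =>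
    intro n
    exact ⟨ih n, fun n' h => ⟨n', h, ih n'⟩, fun m' h => ⟨m', h, ih m'⟩⟩

lemma backKBisim_label {V L : Type*} (G : LGraph V L) :
    ∀ (k : ℕ) (n m : V), BackKBisim G k n m → G.label n = G.label m := by
  intro k
  induction k with
  | zero => intro n m h; exact h
  | succ k ih => intro n m h; exact ih n m h.1

lemma path_root_eq {V L : Type*} (G : LGraph V L) (r : V)
    (hroot : ∀ m, ¬ G.edge m r) (p : List V) (h : IsPathFromTo G r r p) :
    p = [r] := by
  obtain ⟨h1, h2, h3⟩ := h
  rcases List.eq_nil_or_concat p with rfl | ⟨q, a, rfl⟩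
  · simp at h1
  · rw [List.concat_eq_append] at *
    have ha : a = r := by simpa using h2
    subst ha
    rcases List.eq_nil_or_concat q with rfl | ⟨q', b, rfl⟩
    · rfl
    · exfalso
      rw [List.concat_eq_append, List.Chain', List.isChain_append] at h3
      exact hroot b (h3.2.2 b (by simp) a (by simp))

lemma path_step_s16 {V L : Type*} (G : LGraph V L) (r n : V) (p : List V)
    (h : IsPathFromTo G r n p) (hn : n ≠ r) :
    ∃ n' q, G.edge n' n ∧ IsPathFromTo G r n' q ∧ p = q ++ [n] := by
  obtain ⟨h1, h2, h3⟩ := h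
  rcases List.eq_nil_or_concat p with rfl | ⟨q, a, rfl⟩
  · simp at h1
  · rw [List.concat_eq_append] at *
    have ha : a = n := by simpa using h2
    subst ha
    have hq : q ≠ [] := by
      rintro rfl
      simp at h1
      exact hn h1
    rw [List.Chain', List.isChain_append] at h3
    refine ⟨q.getLast hq, q, ?_, ⟨?_, ?_, h3.1⟩, rfl⟩
    · exact h3.2.2 (q.getLast hq) (List.getLast?_eq_getLast hq) _ rfl
    · rwa [List.head?_append_of_ne_nil _ hq] at h1
    · exact List.getLast?_eq_getLast hq

lemma path_map_getLast? {V L : Type*} (G : LGraph V L) (r n : V) (p : List V)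
    (h : IsPathFromTo G r n p) : (p.map G.label).getLast? = some (G.label n) := by
  rw [List.getLast?_map, h.2.1]
  rfl

/-- In a finite rooted labeled tree with a reserved label `lam` not in the
range of the labeling, two nodes are backward `k`-bisimilar iff their
`(k+1)`-traces are equal. -/
theorem backKBisim_iff_ktrace_eq {V L : Type*} [Fintype V]
    (G : LGraph V L) (r : V)
    (hroot : ∀ m, ¬ G.edge m r)
    (hparent : ∀ n, n ≠ r → ∃! m, G.edge m n)
    (hreach : ∀ n, ∃ q, IsPathFromTo G r n q)
    (lam : L) (hlam : ∀ v, G.label v ≠ lam)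
    (m n : V) (k : ℕ)
    (pn pm : List V) (hpn : IsPathFromTo G r n pn) (hpm : IsPathFromTo G r m pm) :
    BackKBisim G k n m ↔
      ktrace lam (pn.map G.label) (k + 1) = ktrace lam (pm.map G.label) (k + 1) := by
  induction k generalizing n m pn pm with
  | zero =>
    rw [ktrace_one lam _ _ (path_map_getLast? G r n pn hpn),
        ktrace_one lam _ _ (path_map_getLast? G r m pm hpm)]
    show G.label n = G.label m ↔ _
    constructor
    · intro h; rw [h]
    · intro h; injection h
  | succ k ih =>
    by_cases hn : n = r
    · by_cases hm : m = r
      · rw [path_root_eq G r hroot pn (hn ▸ hpn), path_root_eq G r hroot pm (hm ▸ hpm),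
            hn, hm]
        simp only [iff_true_intro (backKBisim_refl G (k + 1) r), true_iff]
      · obtain ⟨m', qm, hem, hqm, rfl⟩ := path_step_s16 G r m pm hpm hm
        rw [path_root_eq G r hroot pn (hn ▸ hpn)]
        constructor
        · intro h
          obtain ⟨n', hn', -⟩ := h.2.2 m' hem
          rw [hn] at hn'
          exact absurd hn' (hroot n')
        · intro h
          exfalso
          have h1 : ktrace lam ([r].map G.label) (k + 1 + 1)
              = ktrace lam [] (k + 1) ++ [G.label r] := by
            simpa using ktrace_concat lam [] (G.label r) (k + 1)
          have h2 : ktrace lam ((qm ++ [m]).map G.label) (k + 1 + 1)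
              = ktrace lam (qm.map G.label) (k + 1) ++ [G.label m] := by
            rw [List.map_append]
            simpa using ktrace_concat lam (qm.map G.label) (G.label m) (k + 1)
          rw [h1, h2] at h
          obtain ⟨h3, -⟩ := List.append_inj' h (by simp)
          have h4 : (ktrace lam ([] : List L) (k + 1)).getLast? = some lam := by
            rw [ktrace_nil]
            simp [List.getLast?_replicate]
          have h5 : (ktrace lam (qm.map G.label) (k + 1)).getLast?
              = some (G.label m') :=
            ktrace_getLast? lam _ _ (path_map_getLast? G r m' qm hqm) k
          rw [h3, h5] at h4
          exact hlam m' (by injection h4)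
    · by_cases hm : m = r
      · obtain ⟨n', qn, hen, hqn, rfl⟩ := path_step_s16 G r n pn hpn hn
        rw [path_root_eq G r hroot pm (hm ▸ hpm)]
        constructor
        · intro h
          obtain ⟨m', hm', -⟩ := h.2.1 n' hen
          rw [hm] at hm'
          exact absurd hm' (hroot m')
        · intro h
          exfalso
          have h1 : ktrace lam ([r].map G.label) (k + 1 + 1)
              = ktrace lam [] (k + 1) ++ [G.label r] := by
            simpa using ktrace_concat lam [] (G.label r) (k + 1)
          have h2 : ktrace lam ((qn ++ [n]).map G.label) (k + 1 + 1)
              = ktrace lam (qn.map G.label) (k + 1) ++ [G.label n] := by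
            rw [List.map_append]
            simpa using ktrace_concat lam (qn.map G.label) (G.label n) (k + 1)
          rw [h1, h2] at h
          obtain ⟨h3, -⟩ := List.append_inj' h (by simp)
          have h4 : (ktrace lam ([] : List L) (k + 1)).getLast? = some lam := by
            rw [ktrace_nil]
            simp [List.getLast?_replicate]
          have h5 : (ktrace lam (qn.map G.label) (k + 1)).getLast?
              = some (G.label n') :=
            ktrace_getLast? lam _ _ (path_map_getLast? G r n' qn hqn) k
          rw [← h3, h5] at h4
          exact hlam n' (by injection h4)
      · obtain ⟨n', qn, hen, hqn, hpneq⟩ := path_step_s16 G r n pn hpn hn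
        obtain ⟨m', qm, hem, hqm, hpmeq⟩ := path_step_s16 G r m pm hpm hm
        subst hpneq; subst hpmeq
        have huniqn : ∀ x, G.edge x n → x = n' := by
          obtain ⟨c, -, hcu⟩ := hparent n hn
          intro x hx
          rw [hcu x hx, hcu n' hen]
        have huniqm : ∀ x, G.edge x m → x = m' := by
          obtain ⟨c, -, hcu⟩ := hparent m hm
          intro x hx
          rw [hcu x hx, hcu m' hem]
        have tn : ktrace lam ((qn ++ [n]).map G.label) (k + 1 + 1)
            = ktrace lam (qn.map G.label) (k + 1) ++ [G.label n] := by
          rw [List.map_append]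
          simpa using ktrace_concat lam (qn.map G.label) (G.label n) (k + 1)
        have tm : ktrace lam ((qm ++ [m]).map G.label) (k + 1 + 1)
            = ktrace lam (qm.map G.label) (k + 1) ++ [G.label m] := by
          rw [List.map_append]
          simpa using ktrace_concat lam (qm.map G.label) (G.label m) (k + 1)
        have Ipar := ih m' n' qn qm hqn hqm
        have Inm := ih m n (qn ++ [n]) (qm ++ [m]) hpn hpm
        constructor
        · rintro ⟨hk, hfwd, -⟩
          obtain ⟨m'', hm'', hb⟩ := hfwd n' hen
          have hmm : m'' = m' := huniqm m'' hm''
          subst hmm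
          rw [tn, tm, Ipar.mp hb, backKBisim_label G k n m hk]
        · intro h
          have htail : ktrace lam ((qn ++ [n]).map G.label) (k + 1)
              = ktrace lam ((qm ++ [m]).map G.label) (k + 1) := by
            have := congrArg List.tail h
            rwa [ktrace_tail, ktrace_tail] at this
          have hk : BackKBisim G k n m := Inm.mpr htail
          rw [tn, tm] at h
          obtain ⟨h1, h2⟩ := List.append_inj' h (by simp)
          have hpar : BackKBisim G k n' m' := Ipar.mpr h1
          refine ⟨hk, ?_, ?_⟩
          · intro x hx
            have := huniqn x hx
            subst this
            exact ⟨m', hem, hpar⟩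
          · intro y hy
            have := huniqm y hy
            subst this
            exact ⟨n', hen, hpar⟩
end
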